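/- Let A and B be real random variables on a probability space such that 0 ≤ A ≤ B almost surely, B² is integrable, and E B > 0. Suppose E A ≤ ε·E B and E B² ≤ t·(E B)² for some ε > 0 and t > 0. Then for every δ with 0 ≤ δ ≤ 1, the probability of the event {A ≤ e^δ·ε·B} is at least δ²/(9t). -/

import Mathlib

open MeasureTheory

set_option maxHeartbeats 1000000

/-- Second-moment lemma: if `0 ≤ A ≤ B` a.s., `E A ≤ ε E B`, and `E B² ≤ t (E B)²`, then
for `0 ≤ δ ≤ 1`, `Pr[A ≤ e^δ ε B] ≥ δ²/(9t)`. -/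
theorem stmt10 {Ω : Type*} [MeasurableSpace Ω] (μ : Measure Ω) [IsProbabilityMeasure μ]
    (A B : Ω → ℝ)
    (hAB : ∀ᵐ ω ∂μ, 0 ≤ A ω ∧ A ω ≤ B ω)
    (hA : Integrable A μ) (hB : Integrable B μ)
    (hB2 : Integrable (fun ω => B ω ^ 2) μ)
    (hEB : 0 < ∫ ω, B ω ∂μ)
    (ε t : ℝ) (hε : 0 < ε) (ht : 0 < t)
    (hEA : ∫ ω, A ω ∂μ ≤ ε * ∫ ω, B ω ∂μ)
    (hEB2 : ∫ ω, B ω ^ 2 ∂μ ≤ t * (∫ ω, B ω ∂μ) ^ 2)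
    (δ : ℝ) (hδ0 : 0 ≤ δ) (hδ1 : δ ≤ 1) :
    δ ^ 2 / (9 * t) ≤ (μ {ω | A ω ≤ Real.exp δ * ε * B ω}).toReal := by
  classical
  set c : ℝ := Real.exp δ * ε with hc
  have hc0 : 0 < c := mul_pos (Real.exp_pos δ) hε
  -- measurable versions
  obtain ⟨A', hA'm, hAA'⟩ : ∃ A' : Ω → ℝ, Measurable A' ∧ A =ᵐ[μ] A' :=
    ⟨hA.1.mk A, hA.1.stronglyMeasurable_mk.measurable, hA.1.ae_eq_mk⟩
  obtain ⟨B', hB'm, hBB'⟩ : ∃ B' : Ω → ℝ, Measurable B' ∧ B =ᵐ[μ] B' :=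
    ⟨hB.1.mk B, hB.1.stronglyMeasurable_mk.measurable, hB.1.ae_eq_mk⟩
  have hbad : μ {ω | ¬ (A ω = A' ω ∧ B ω = B' ω)} = 0 :=
    ae_iff.mp (hAA'.and hBB')
  set M : Set Ω := toMeasurable μ {ω | ¬ (A ω = A' ω ∧ B ω = B' ω)} with hMdef
  have hMm : MeasurableSet M := measurableSet_toMeasurable _ _
  have hMnull : μ M = 0 := by rw [hMdef, measure_toMeasurable]; exact hbad
  have hMae : ∀ᵐ ω ∂μ, ω ∉ M := by
    rw [ae_iff]; simpa using hMnull
  set S : Set Ω := {ω | A' ω ≤ c * B' ω} ∩ Mᶜ with hSdef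
  have hSm : MeasurableSet S :=
    (measurableSet_le hA'm (hB'm.const_mul c)).inter hMm.compl
  have hsub : S ⊆ {ω | A ω ≤ Real.exp δ * ε * B ω} := by
    rintro ω ⟨h1, h2⟩
    have hω : ¬ ¬ (A ω = A' ω ∧ B ω = B' ω) := fun hn =>
      h2 (subset_toMeasurable μ _ hn)
    obtain ⟨e1, e2⟩ := not_not.mp hω
    show A ω ≤ Real.exp δ * ε * B ω
    rw [e1, e2]; exact h1
  -- reduce to bound on μ S
  have hmono : (μ S).toReal ≤ (μ {ω | A ω ≤ Real.exp δ * ε * B ω}).toReal :=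
    ENNReal.toReal_mono (measure_ne_top μ _) (measure_mono hsub)
  refine le_trans ?_ hmono
  -- integrable versions
  have hA' : Integrable A' μ := hA.congr hAA'
  have hB' : Integrable B' μ := hB.congr hBB'
  have hB'2 : Integrable (fun ω => B' ω ^ 2) μ :=
    hB2.congr (hBB'.mono fun ω h => by simp [h])
  set I : ℝ := ∫ ω, B ω ∂μ with hIdef
  have hIB' : ∫ ω, B' ω ∂μ = I := (integral_congr_ae hBB'.symm)
  have hIA' : ∫ ω, A' ω ∂μ = ∫ ω, A ω ∂μ := (integral_congr_ae hAA'.symm)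
  have hB'nonneg : ∀ᵐ ω ∂μ, 0 ≤ B' ω := by
    filter_upwards [hAB, hAA', hBB'] with ω h h1 h2
    rw [← h2]; exact le_trans h.1 h.2
  have hA'nonneg : ∀ᵐ ω ∂μ, 0 ≤ A' ω := by
    filter_upwards [hAB, hAA'] with ω h h1
    rw [← h1]; exact h.1
  -- Step (a): ∫_{Sᶜ} B' ≤ ε I / c
  have hstepA : c * ∫ ω in Sᶜ, B' ω ∂μ ≤ ε * I := by
    have h1 : ∫ ω in Sᶜ, c * B' ω ∂μ ≤ ∫ ω in Sᶜ, A' ω ∂μ := by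
      refine setIntegral_mono_ae_restrict ((hB'.const_mul c).restrict)
        (hA'.restrict) ?_
      filter_upwards [ae_restrict_of_ae hMae, ae_restrict_mem hSm.compl]
        with ω hωM hωS
      have : ω ∉ S := hωS
      rw [hSdef] at this
      simp only [Set.mem_inter_iff, Set.mem_setOf_eq, Set.mem_compl_iff,
        not_and_or, not_not] at this
      rcases this with h | h
      · exact le_of_lt (lt_of_not_ge h)
      · exact absurd h hωM
    have h2 : ∫ ω in Sᶜ, A' ω ∂μ ≤ ∫ ω, A' ω ∂μ :=
      setIntegral_le_integral hA' hA'nonneg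
    calc c * ∫ ω in Sᶜ, B' ω ∂μ = ∫ ω in Sᶜ, c * B' ω ∂μ := by
          rw [integral_const_mul]
      _ ≤ ∫ ω in Sᶜ, A' ω ∂μ := h1
      _ ≤ ∫ ω, A' ω ∂μ := h2
      _ ≤ ε * I := by rw [hIA']; exact hEA
  -- Step (b): ∫_{S} B' ≥ (1 - e^{-δ}) I
  have hsplit : (∫ ω in S, B' ω ∂μ) + ∫ ω in Sᶜ, B' ω ∂μ = I := by
    rw [← hIB']; exact integral_add_compl hSm hB'
  have hcompl : ∫ ω in Sᶜ, B' ω ∂μ ≤ I / Real.exp δ := by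
    have hεI : ε * I / c = I / Real.exp δ := by
      rw [hc]; field_simp
    rw [← hεI]
    rw [div_eq_inv_mul, ← mul_le_mul_iff_of_pos_left hc0, ← mul_assoc,
      mul_inv_cancel₀ (ne_of_gt hc0), one_mul]
    exact hstepA
  have hstepB : (1 - (Real.exp δ)⁻¹) * I ≤ ∫ ω in S, B' ω ∂μ := by
    have : ∫ ω in S, B' ω ∂μ = I - ∫ ω in Sᶜ, B' ω ∂μ := by linarith [hsplit]
    rw [this]
    have : I / Real.exp δ = (Real.exp δ)⁻¹ * I := by ring
    nlinarith [hcompl, this]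
  -- Step (c): Cauchy–Schwarz
  have hCS : (∫ ω in S, B' ω ∂μ) ^ 2 ≤ (μ S).toReal * ∫ ω, B' ω ^ 2 ∂μ := by
    set f : Ω → ℝ := S.indicator (fun _ => (1 : ℝ)) with hfdef
    have hpq : (2 : ℝ).HolderConjugate 2 := Real.HolderConjugate.two_two
    have hf_nonneg : 0 ≤ᵐ[μ] f :=
      Filter.Eventually.of_forall fun ω => Set.indicator_nonneg (fun _ _ => zero_le_one) ω
    have hf_mem : MemLp f (ENNReal.ofReal 2) μ := by
      have : (ENNReal.ofReal 2) = 2 := by norm_num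
      rw [this]
      exact memLp_indicator_const 2 hSm 1 (Or.inr (measure_ne_top μ S))
    have hg_mem : MemLp B' (ENNReal.ofReal 2) μ := by
      have : (ENNReal.ofReal 2) = 2 := by norm_num
      rw [this]
      exact (memLp_two_iff_integrable_sq hB'.1).mpr hB'2
    have key := integral_mul_le_Lp_mul_Lq_of_nonneg hpq hf_nonneg hB'nonneg hf_mem hg_mem
    have hfg : ∫ ω, f ω * B' ω ∂μ = ∫ ω in S, B' ω ∂μ := by
      rw [← integral_indicator hSm]
      apply integral_congr_ae
      apply Filter.Eventually.of_forall
      intro ω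
      by_cases hω : ω ∈ S <;> simp [hfdef, hω]
    have hf2 : ∫ ω, f ω ^ (2 : ℝ) ∂μ = (μ S).toReal := by
      have : (fun ω => f ω ^ (2 : ℝ)) = S.indicator (fun _ => (1 : ℝ)) := by
        funext ω
        by_cases hω : ω ∈ S <;>
          simp [hfdef, hω, Real.zero_rpow (by norm_num : (2:ℝ) ≠ 0)]
      rw [this, integral_indicator_const _ hSm]
      simp [measureReal_def]
    have hg2 : ∫ ω, B' ω ^ (2 : ℝ) ∂μ = ∫ ω, B' ω ^ 2 ∂μ := by
      apply integral_congr_ae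
      apply Filter.Eventually.of_forall
      intro ω
      show B' ω ^ (2:ℝ) = B' ω ^ (2:ℕ)
      rw [← Real.rpow_natCast (B' ω) 2]
      norm_num
    rw [hfg, hf2, hg2] at key
    -- key : ∫ in S, B' ≤ (μ S).toReal ^ (1/2) * (∫ B'^2) ^ (1/2)
    have hP0 : (0:ℝ) ≤ (μ S).toReal := ENNReal.toReal_nonneg
    have hJ0 : (0:ℝ) ≤ ∫ ω, B' ω ^ 2 ∂μ :=
      integral_nonneg fun ω => sq_nonneg _
    have hSB0 : 0 ≤ ∫ ω in S, B' ω ∂μ :=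
      setIntegral_nonneg_ae hSm (hB'nonneg.mono fun ω h _ => h)
    have hsq : ((μ S).toReal ^ ((1:ℝ)/2) * (∫ ω, B' ω ^ 2 ∂μ) ^ ((1:ℝ)/2)) ^ 2
        = (μ S).toReal * ∫ ω, B' ω ^ 2 ∂μ := by
      rw [mul_pow, ← Real.rpow_natCast ((μ S).toReal ^ ((1:ℝ)/2)) 2,
        ← Real.rpow_natCast ((∫ ω, B' ω ^ 2 ∂μ) ^ ((1:ℝ)/2)) 2,
        ← Real.rpow_mul hP0, ← Real.rpow_mul hJ0]
      norm_num
    calc (∫ ω in S, B' ω ∂μ) ^ 2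
        ≤ ((μ S).toReal ^ ((1:ℝ)/2) * (∫ ω, B' ω ^ 2 ∂μ) ^ ((1:ℝ)/2)) ^ 2 := by
          apply pow_le_pow_left₀ hSB0 key
      _ = (μ S).toReal * ∫ ω, B' ω ^ 2 ∂μ := hsq
  -- combine
  have hIB'2 : ∫ ω, B' ω ^ 2 ∂μ ≤ t * I ^ 2 := by
    have hBB2 : (fun ω => B ω ^ 2) =ᵐ[μ] fun ω => B' ω ^ 2 :=
      hBB'.mono fun ω h => by simp [h]
    rw [integral_congr_ae hBB2.symm]; exact hEB2
  have hexp : δ / 3 ≤ 1 - (Real.exp δ)⁻¹ := by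
    have h1 : δ + 1 ≤ Real.exp δ := Real.add_one_le_exp δ
    have h2 : (0:ℝ) < (Real.exp δ)⁻¹ := by positivity
    have h3 : (Real.exp δ)⁻¹ * Real.exp δ = 1 :=
      inv_mul_cancel₀ (ne_of_gt (Real.exp_pos δ))
    have h4 : (Real.exp δ)⁻¹ * (δ + 1) ≤ 1 := by
      calc (Real.exp δ)⁻¹ * (δ + 1) ≤ (Real.exp δ)⁻¹ * Real.exp δ :=
            mul_le_mul_of_nonneg_left h1 (le_of_lt h2)
        _ = 1 := h3
    nlinarith [h4, h2, hδ0, hδ1]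
  have hP0 : (0:ℝ) ≤ (μ S).toReal := ENNReal.toReal_nonneg
  have hfrac0 : 0 ≤ 1 - (Real.exp δ)⁻¹ := le_trans (by positivity) hexp
  have hkey : ((1 - (Real.exp δ)⁻¹) * I) ^ 2 ≤ (μ S).toReal * (t * I ^ 2) := by
    calc ((1 - (Real.exp δ)⁻¹) * I) ^ 2 ≤ (∫ ω in S, B' ω ∂μ) ^ 2 := by
          apply pow_le_pow_left₀ (by positivity) hstepB
      _ ≤ (μ S).toReal * ∫ ω, B' ω ^ 2 ∂μ := hCS
      _ ≤ (μ S).toReal * (t * I ^ 2) := by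
          apply mul_le_mul_of_nonneg_left hIB'2 hP0
  have hI2 : (0:ℝ) < I ^ 2 := by positivity
  have h9 : (1 - (Real.exp δ)⁻¹) ^ 2 ≤ (μ S).toReal * t := by
    nlinarith [hkey]
  have hδ3 : δ ^ 2 / 9 ≤ (1 - (Real.exp δ)⁻¹) ^ 2 := by
    nlinarith [hexp, hδ0]
  rw [div_le_iff₀ (by positivity)]
  nlinarith [h9, hδ3]
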